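/- Let n ≥ 1, N = {0,1,...,n}, and let β₁, β₂ : 2^N → ℝ be submodular set functions with β₁(∅) = β₂(∅) = 0 and β₁(N) = β₂(N) = 0. Then the base polytope of their sum is the Minkowski sum of their base polytopes: P(β₁ + β₂) = P(β₁) + P(β₂), where P(β) = {x ∈ ℝ^N : Σ_{i∈S} x_i ≤ β(S) for all S ⊆ N, and Σ_{i∈N} x_i = 0} and the sum on the right is the Minkowski sum of sets. -/

import Mathlib

open Finset Pointwise

/-- The `i`-th standard basis vector of `ℝ^N`. -/
noncomputable def std {m : ℕ} (i : Fin m) : Fin m → ℝ := fun k => if k = i then 1 else 0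

/-- The 0/1 indicator vector of a subset `S ⊆ N`. -/
noncomputable def indic {m : ℕ} (S : Finset (Fin m)) : Fin m → ℝ := fun k => if k ∈ S then 1 else 0

/-- The standard inner product on `ℝ^N`. -/
noncomputable def ip {m : ℕ} (a b : Fin m → ℝ) : ℝ := ∑ k, a k * b k

/-- The cut set function of symmetric edge weights `b`: `β(S) = Σ_{i∈S, j∉S} b i j`. -/
noncomputable def cutFun {m : ℕ} (b : Fin m → Fin m → ℝ) (S : Finset (Fin m)) : ℝ :=
  ∑ i ∈ S, ∑ j ∈ Sᶜ, b i j

/-- The base polytope of a set function `β`. -/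
def basePoly {m : ℕ} (β : Finset (Fin m) → ℝ) : Set (Fin m → ℝ) :=
  {x | (∀ S : Finset (Fin m), ∑ i ∈ S, x i ≤ β S) ∧ ∑ i, x i = 0}

/-- Frank's discrete sandwich theorem, restricted to subsets of a finite set `U`. -/
lemma sandwich {α : Type*} [DecidableEq α] (U : Finset α) :
    ∀ (p b : Finset α → ℝ),
    (∀ S T : Finset α, S ⊆ U → T ⊆ U → p S + p T ≤ p (S ∪ T) + p (S ∩ T)) →
    (∀ S T : Finset α, S ⊆ U → T ⊆ U → b (S ∪ T) + b (S ∩ T) ≤ b S + b T) →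
    (∀ S : Finset α, S ⊆ U → p S ≤ b S) → p ∅ = 0 → b ∅ = 0 →
    ∃ x : α → ℝ, ∀ S : Finset α, S ⊆ U → p S ≤ ∑ i ∈ S, x i ∧ ∑ i ∈ S, x i ≤ b S := by
  induction U using Finset.strongInduction with
  | _ U IH =>
  intro p b hp hb hpb hp0 hb0
  rcases U.eq_empty_or_nonempty with rfl | ⟨v, hv⟩
  · refine ⟨fun _ => 0, fun S hS => ?_⟩
    rw [Finset.subset_empty] at hS; subst hS
    simp [hp0, hb0]
  · set U' := U.erase v with hU'def
    have hvU' : v ∉ U' := Finset.notMem_erase v U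
    have hU'U : U' ⊆ U := Finset.erase_subset v U
    have hins : ∀ S : Finset α, S ⊆ U' → insert v S ⊆ U := fun S hS =>
      Finset.insert_subset hv (hS.trans hU'U)
    have hfeas : ∀ S T : Finset α, S ⊆ U' → T ⊆ U' →
        p (insert v S) - b S ≤ b (insert v T) - p T := by
      intro S T hS hT
      have hvS : v ∉ S := fun h => hvU' (hS h)
      have hvT : v ∉ T := fun h => hvU' (hT h)
      have h1 := hp (insert v S) T (hins S hS) (hT.trans hU'U)
      rw [Finset.insert_union, Finset.insert_inter_of_notMem hvT] at h1
      have h2 := hb (insert v T) S (hins T hT) (hS.trans hU'U)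
      rw [Finset.insert_union, Finset.insert_inter_of_notMem hvS,
        Finset.union_comm T S, Finset.inter_comm T S] at h2
      have h3 : p (insert v (S ∪ T)) ≤ b (insert v (S ∪ T)) :=
        hpb _ (hins _ (Finset.union_subset hS hT))
      have h4 : p (S ∩ T) ≤ b (S ∩ T) :=
        hpb _ ((Finset.inter_subset_left).trans (hS.trans hU'U))
      linarith
    have hne : (U'.powerset).Nonempty := ⟨∅, Finset.empty_mem_powerset U'⟩
    set xv := (U'.powerset).inf' hne (fun S => b (insert v S) - p S) with hxvdef
    have hxv_le : ∀ S : Finset α, S ⊆ U' → xv ≤ b (insert v S) - p S := fun S hS =>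
      Finset.inf'_le _ (Finset.mem_powerset.mpr hS)
    have hxv_ge : ∀ S : Finset α, S ⊆ U' → p (insert v S) - b S ≤ xv := fun S hS =>
      Finset.le_inf' hne _ (fun T hT => hfeas S T hS (Finset.mem_powerset.mp hT))
    set p' : Finset α → ℝ := fun S => max (p S) (p (insert v S) - xv) with hp'def
    set b' : Finset α → ℝ := fun S => min (b S) (b (insert v S) - xv) with hb'def
    have hp'sup : ∀ S T : Finset α, S ⊆ U' → T ⊆ U' → p' S + p' T ≤ p' (S ∪ T) + p' (S ∩ T) := by
      intro S T hS hT
      have hvS : v ∉ S := fun h => hvU' (hS h)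
      have hvT : v ∉ T := fun h => hvU' (hT h)
      have hSU := hS.trans hU'U
      have hTU := hT.trans hU'U
      have hl1 : p (S ∪ T) ≤ p' (S ∪ T) := le_max_left _ _
      have hl2 : p (insert v (S ∪ T)) - xv ≤ p' (S ∪ T) := le_max_right _ _
      have hr1 : p (S ∩ T) ≤ p' (S ∩ T) := le_max_left _ _
      have hr2 : p (insert v (S ∩ T)) - xv ≤ p' (S ∩ T) := le_max_right _ _
      have c11 := hp S T hSU hTU
      have c22 := hp (insert v S) (insert v T) (hins S hS) (hins T hT)
      rw [Finset.insert_union, Finset.union_insert, Finset.insert_idem,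
        Finset.insert_inter_of_mem (Finset.mem_insert_self v T),
        Finset.inter_insert_of_notMem hvS] at c22
      have c12 := hp S (insert v T) hSU (hins T hT)
      rw [Finset.union_insert, Finset.inter_insert_of_notMem hvS] at c12
      have c21 := hp (insert v S) T (hins S hS) hTU
      rw [Finset.insert_union, Finset.insert_inter_of_notMem hvT] at c21
      have eS : p' S = max (p S) (p (insert v S) - xv) := rfl
      have eT : p' T = max (p T) (p (insert v T) - xv) := rfl
      rw [eS, eT]
      rcases max_choice (p S) (p (insert v S) - xv) with h1 | h1 <;>
        rcases max_choice (p T) (p (insert v T) - xv) with h2 | h2 <;>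
        rw [h1, h2] <;> linarith
    have hb'sub : ∀ S T : Finset α, S ⊆ U' → T ⊆ U' → b' (S ∪ T) + b' (S ∩ T) ≤ b' S + b' T := by
      intro S T hS hT
      have hvS : v ∉ S := fun h => hvU' (hS h)
      have hvT : v ∉ T := fun h => hvU' (hT h)
      have hSU := hS.trans hU'U
      have hTU := hT.trans hU'U
      have hl1 : b' (S ∪ T) ≤ b (S ∪ T) := min_le_left _ _
      have hl2 : b' (S ∪ T) ≤ b (insert v (S ∪ T)) - xv := min_le_right _ _
      have hr1 : b' (S ∩ T) ≤ b (S ∩ T) := min_le_left _ _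
      have hr2 : b' (S ∩ T) ≤ b (insert v (S ∩ T)) - xv := min_le_right _ _
      have c11 := hb S T hSU hTU
      have c22 := hb (insert v S) (insert v T) (hins S hS) (hins T hT)
      rw [Finset.insert_union, Finset.union_insert, Finset.insert_idem,
        Finset.insert_inter_of_mem (Finset.mem_insert_self v T),
        Finset.inter_insert_of_notMem hvS] at c22
      have c12 := hb S (insert v T) hSU (hins T hT)
      rw [Finset.union_insert, Finset.inter_insert_of_notMem hvS] at c12
      have c21 := hb (insert v S) T (hins S hS) hTU
      rw [Finset.insert_union, Finset.insert_inter_of_notMem hvT] at c21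
      have eS : b' S = min (b S) (b (insert v S) - xv) := rfl
      have eT : b' T = min (b T) (b (insert v T) - xv) := rfl
      rw [eS, eT]
      rcases min_choice (b S) (b (insert v S) - xv) with h1 | h1 <;>
        rcases min_choice (b T) (b (insert v T) - xv) with h2 | h2 <;>
        rw [h1, h2] <;> linarith
    have hpb' : ∀ S : Finset α, S ⊆ U' → p' S ≤ b' S := by
      intro S hS
      have h1 := hpb S (hS.trans hU'U)
      have h2 := hpb (insert v S) (hins S hS)
      have h3 := hxv_le S hS
      have h4 := hxv_ge S hS
      refine max_le (le_min h1 (by linarith)) (le_min (by linarith) (by linarith))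
    have hp'0 : p' ∅ = 0 := by
      have h := hxv_ge ∅ (Finset.empty_subset _)
      rw [hb0] at h
      have : p (insert v ∅) - xv ≤ 0 := by linarith
      rw [hp'def]
      simp only
      rw [hp0, max_eq_left this]
    have hb'0 : b' ∅ = 0 := by
      have h := hxv_le ∅ (Finset.empty_subset _)
      rw [hp0] at h
      have : (0:ℝ) ≤ b (insert v ∅) - xv := by linarith
      rw [hb'def]
      simp only
      rw [hb0, min_eq_left this]
    obtain ⟨x', hx'⟩ := IH U' (Finset.erase_ssubset hv) p' b' hp'sup hb'sub hpb' hp'0 hb'0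
    refine ⟨Function.update x' v xv, fun S hSU => ?_⟩
    by_cases hvS : v ∈ S
    · have hS' : S.erase v ⊆ U' := Finset.erase_subset_erase v hSU
      have hsum : ∑ i ∈ S, Function.update x' v xv i
          = xv + ∑ i ∈ S.erase v, x' i := by
        rw [← Finset.insert_erase hvS, Finset.sum_insert (Finset.notMem_erase v S),
          Function.update_self, Finset.erase_insert (Finset.notMem_erase v S)]
        congr 1
        exact Finset.sum_congr rfl fun i hi =>
          Function.update_of_ne (Finset.ne_of_mem_erase hi) _ _
      obtain ⟨hlo, hhi⟩ := hx' (S.erase v) hS'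
      have h2 : p (insert v (S.erase v)) - xv ≤ p' (S.erase v) := le_max_right _ _
      have h3 : b' (S.erase v) ≤ b (insert v (S.erase v)) - xv := min_le_right _ _
      rw [Finset.insert_erase hvS] at h2 h3
      rw [hsum]
      constructor <;> linarith
    · have hS' : S ⊆ U' := Finset.subset_erase.mpr ⟨hSU, hvS⟩
      have hsum : ∑ i ∈ S, Function.update x' v xv i = ∑ i ∈ S, x' i :=
        Finset.sum_congr rfl fun i hi =>
          Function.update_of_ne (ne_of_mem_of_not_mem hi hvS) _ _
      obtain ⟨hlo, hhi⟩ := hx' S hS'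
      have h2 : p S ≤ p' S := le_max_left _ _
      have h3 : b' S ≤ b S := min_le_left _ _
      rw [hsum]
      constructor <;> linarith

/-- The base polytope of a sum of two submodular functions (vanishing on
`∅` and `N`) is the Minkowski sum of the two base polytopes. -/
theorem basePoly_add (n : ℕ) (hn : 1 ≤ n) (β₁ β₂ : Finset (Fin (n + 1)) → ℝ)
    (hsub₁ : ∀ S T : Finset (Fin (n + 1)), β₁ (S ∩ T) + β₁ (S ∪ T) ≤ β₁ S + β₁ T)
    (hsub₂ : ∀ S T : Finset (Fin (n + 1)), β₂ (S ∩ T) + β₂ (S ∪ T) ≤ β₂ S + β₂ T)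
    (hempty₁ : β₁ ∅ = 0) (hempty₂ : β₂ ∅ = 0)
    (hfull₁ : β₁ Finset.univ = 0) (hfull₂ : β₂ Finset.univ = 0) :
    basePoly (fun S => β₁ S + β₂ S) = basePoly β₁ + basePoly β₂ := by
  ext x
  constructor
  · rintro ⟨hineq, hzero⟩
    obtain ⟨x₁, hx₁⟩ := sandwich (Finset.univ : Finset (Fin (n + 1)))
      (fun S => ∑ i ∈ S, x i - β₂ S) β₁
      (by
        intro S T _ _
        have h := hsub₂ S T
        have hs := Finset.sum_union_inter (s₁ := S) (s₂ := T) (f := x)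
        linarith)
      (by
        intro S T _ _
        have h := hsub₁ S T
        linarith)
      (fun S _ => by have := hineq S; simp only at this ⊢; linarith)
      (by simp [hempty₂])
      (by rw [hempty₁])
    obtain ⟨hu1, hu2⟩ := hx₁ Finset.univ (subset_refl _)
    rw [hzero, hfull₂] at hu1
    rw [hfull₁] at hu2
    have hsum1 : ∑ i, x₁ i = 0 := le_antisymm hu2 (by linarith)
    refine Set.mem_add.mpr ⟨x₁, ⟨fun S => (hx₁ S (Finset.subset_univ S)).2, hsum1⟩,
      x - x₁, ⟨?_, ?_⟩, by abel⟩
    · intro S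
      obtain ⟨hlo, _⟩ := hx₁ S (Finset.subset_univ S)
      have : ∑ i ∈ S, (x - x₁) i = ∑ i ∈ S, x i - ∑ i ∈ S, x₁ i := by
        simp [Finset.sum_sub_distrib]
      rw [this]; linarith
    · have : ∑ i, (x - x₁) i = ∑ i, x i - ∑ i, x₁ i := by
        simp [Finset.sum_sub_distrib]
      rw [this, hzero, hsum1]; ring
  · intro hx
    obtain ⟨x₁, ⟨h₁, h₁0⟩, x₂, ⟨h₂, h₂0⟩, rfl⟩ := Set.mem_add.mp hx
    constructor
    · intro S
      have : ∑ i ∈ S, (x₁ + x₂) i = ∑ i ∈ S, x₁ i + ∑ i ∈ S, x₂ i := by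
        simp [Finset.sum_add_distrib]
      rw [this]
      exact add_le_add (h₁ S) (h₂ S)
    · have : ∑ i, (x₁ + x₂) i = ∑ i, x₁ i + ∑ i, x₂ i := by
        simp [Finset.sum_add_distrib]
      rw [this, h₁0, h₂0]; ring
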